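/- arXiv:1403.6501 — 3 statements merged into one kernel-verified Lean document; each statement's English description precedes it below -/
import Mathlib

section
/- Let K be a number field of degree n with unit rank r ≥ 1, fundamental units ε_1, ..., ε_r, and set F(ε) = {t_1Λ(ε_1)+...+t_rΛ(ε_r) : |t_j| ≤ 1/2 for all j}, D_v = max_{η ∈ F(ε)} η_v for each v|∞. Let 𝔞 be a nonzero ideal of O_K and B ≥ 1. Then every point P ∈ ℙ^N(K) with H_K(P) ≤ B whose associated ideal class equals Cl(𝔞) admits homogeneous coordinates x_0, ..., x_N ∈ 𝔞 such that: 𝔞 is the ideal generated by x_0, ..., x_N; |N_{K/ℚ}(x_i)| ≤ B·N(𝔞) for all i; and ‖x_i‖_v ≤ (B·N(𝔞))^{n_v/n} · exp(D_v) for all i and all Archimedean places v. -/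
open NumberField
open scoped nonZeroDivisors

variable {K : Type*} [Field K] [NumberField K]

/-- The logarithmic map `Λ : K* → ∏_{v|∞} ℝ`, `Λ(x)_v = log ‖x‖_v = log (|x|_v^{n_v})`. -/
noncomputable def logEmb (x : K) (w : InfinitePlace K) : ℝ :=
  Real.log ((w x) ^ w.mult)

/-- `H_∞(x_0,...,x_N) = ∏_{v|∞} max_i ‖x_i‖_v`. -/
noncomputable def Hinf {m : ℕ} (x : Fin m → K) : ℝ :=
  ∏ w : InfinitePlace K, ⨆ i, (w (x i)) ^ w.mult

lemma logEmb_eq (x : K) (w : InfinitePlace K) :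
    logEmb x w = (w.mult : ℝ) * Real.log (w x) := by
  rw [logEmb, Real.log_pow]

lemma wne {x : K} (hx : x ≠ 0) (w : InfinitePlace K) : w x ≠ 0 :=
  (InfinitePlace.pos_iff.mpr hx).ne'

lemma logEmb_mul {a b : K} (ha : a ≠ 0) (hb : b ≠ 0) (w : InfinitePlace K) :
    logEmb (a * b) w = logEmb a w + logEmb b w := by
  simp only [logEmb_eq, map_mul]
  rw [Real.log_mul (wne ha w) (wne hb w)]; ring

lemma logEmb_zpow (x : K) (k : ℤ) (w : InfinitePlace K) :
    logEmb (x ^ k) w = (k : ℝ) * logEmb x w := by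
  simp only [logEmb_eq, map_zpow₀, Real.log_zpow]; ring

lemma sum_logEmb {x : K} (hx : x ≠ 0) :
    ∑ w : InfinitePlace K, logEmb x w = Real.log ((|Algebra.norm ℚ x| : ℚ) : ℝ) := by
  rw [← InfinitePlace.prod_eq_abs_norm, Real.log_prod]
  · rfl
  · exact fun w _ => pow_ne_zero _ (wne hx w)

lemma sum_logEmb_unit (u : (𝓞 K)ˣ) :
    ∑ w : InfinitePlace K, logEmb (u : K) w = 0 := by
  rw [sum_logEmb (Units.coe_ne_zero u), Units.norm]
  simp

open NumberField.Units NumberField.Units.dirichletUnitTheorem in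
lemma logEmbedding_eps (ε : (𝓞 K)ˣ) (w : {w : InfinitePlace K // w ≠ NumberField.Units.dirichletUnitTheorem.w₀}) :
    logEmbedding K (Additive.ofMul ε) w = logEmb ((ε : 𝓞 K) : K) w.val := by
  rw [logEmbedding_component, logEmb_eq]

open NumberField.Units NumberField.Units.dirichletUnitTheorem in
lemma logEmbedding_combo (r : ℕ) (ε : Fin r → (𝓞 K)ˣ) (m : Fin r → ℤ) :
    logEmbedding K (Additive.ofMul (∏ j, ε j ^ m j)) =
      ∑ j, (m j : ℝ) • logEmbedding K (Additive.ofMul (ε j)) := by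
  classical
  induction (Finset.univ : Finset (Fin r)) using Finset.induction with
  | empty => simp
  | insert _ _ h ih =>
    rw [Finset.prod_insert h, Finset.sum_insert h, ofMul_mul, map_add, ih, ofMul_zpow,
      map_zsmul, ← Int.cast_smul_eq_zsmul ℝ]

open NumberField.Units NumberField.Units.dirichletUnitTheorem in
lemma span_logEmb_top (r : ℕ) (ε : Fin r → (𝓞 K)ˣ)
    (hfund : ∀ u : (𝓞 K)ˣ, ∃ (ζ : (𝓞 K)ˣ) (m : Fin r → ℤ),
      IsOfFinOrder ζ ∧ u = ζ * ∏ j, ε j ^ m j) :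
    Submodule.span ℝ (Set.range fun j => logEmbedding K (Additive.ofMul (ε j))) = ⊤ := by
  rw [← top_le_iff, ← unitLattice_span_eq_top K, Submodule.span_le]
  rintro x ⟨u, -, rfl⟩
  obtain ⟨ζ, m, hζ, hu⟩ := hfund u.toMul
  have : (logEmbedding K).toIntLinearMap u =
      ∑ j, (m j : ℝ) • logEmbedding K (Additive.ofMul (ε j)) := by
    have hu' : u = Additive.ofMul (ζ * ∏ j, ε j ^ m j) := by
      rw [← hu]; rfl
    rw [hu']
    show logEmbedding K (Additive.ofMul (ζ * ∏ j, ε j ^ m j)) = _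
    rw [ofMul_mul, map_add, logEmbedding_eq_zero_iff.mpr hζ, zero_add, logEmbedding_combo]
  rw [this]
  exact Submodule.sum_mem _ fun j _ =>
    Submodule.smul_mem _ _ (Submodule.subset_span ⟨j, rfl⟩)

open NumberField.Units NumberField.Units.dirichletUnitTheorem in
lemma exists_combo (r : ℕ) (ε : Fin r → (𝓞 K)ˣ)
    (hfund : ∀ u : (𝓞 K)ˣ, ∃ (ζ : (𝓞 K)ˣ) (m : Fin r → ℤ),
      IsOfFinOrder ζ ∧ u = ζ * ∏ j, ε j ^ m j)
    (f : InfinitePlace K → ℝ) (hf : ∑ w, f w = 0) :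
    ∃ s : Fin r → ℝ, ∀ w, f w = ∑ j, s j * logEmb ((ε j : 𝓞 K) : K) w := by
  classical
  have hmem : (fun w : {w : InfinitePlace K // w ≠ w₀} => f w.val) ∈
      Submodule.span ℝ (Set.range fun j => logEmbedding K (Additive.ofMul (ε j))) := by
    rw [span_logEmb_top r ε hfund]; trivial
  obtain ⟨s, hs⟩ := (Submodule.mem_span_range_iff_exists_fun ℝ).mp hmem
  refine ⟨s, ?_⟩
  set g : InfinitePlace K → ℝ := fun w => f w - ∑ j, s j * logEmb ((ε j : 𝓞 K) : K) w with hg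
  have hgne : ∀ w (hw : w ≠ w₀), g w = 0 := by
    intro w hw
    have := congrFun hs ⟨w, hw⟩
    simp only [Finset.sum_apply, Pi.smul_apply, smul_eq_mul] at this
    simp only [hg]
    rw [sub_eq_zero, ← this]
    exact Finset.sum_congr rfl fun j _ => by rw [logEmbedding_eps]
  have hsum : ∑ w, g w = 0 := by
    simp only [hg, Finset.sum_sub_distrib, hf, Finset.sum_comm (γ := Fin r), zero_sub, neg_eq_zero]
    rw [Finset.sum_comm]
    refine Finset.sum_eq_zero fun j _ => ?_
    rw [← Finset.mul_sum, sum_logEmb_unit (ε j), mul_zero]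
  have hg0 : g w₀ = 0 := by
    have h2 : ∑ w ∈ Finset.univ.erase w₀, g w = 0 :=
      Finset.sum_eq_zero fun w hw => hgne w (Finset.ne_of_mem_erase hw)
    have h3 := Finset.add_sum_erase Finset.univ g (Finset.mem_univ w₀)
    rw [h2, add_zero] at h3
    rw [h3, hsum]
  intro w
  have : g w = 0 := by
    by_cases hw : w = w₀
    · rw [hw]; exact hg0
    · exact hgne w hw
  simpa [hg, sub_eq_zero] using this

lemma spanFinset_smul {m : ℕ} (a : K) (z : Fin m → K) :
    FractionalIdeal.spanFinset (𝓞 K) Finset.univ (fun i => a * z i) =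
      FractionalIdeal.spanSingleton (𝓞 K)⁰ a *
        FractionalIdeal.spanFinset (𝓞 K) Finset.univ z := by
  rw [← FractionalIdeal.coeToSubmodule_inj, FractionalIdeal.coe_mul,
    FractionalIdeal.coe_spanSingleton, FractionalIdeal.spanFinset_coe,
    FractionalIdeal.spanFinset_coe, Submodule.span_singleton_mul, Submodule.smul_span]
  congr 1
  ext t
  constructor
  · rintro ⟨i, -, rfl⟩
    exact ⟨z i, ⟨i, Finset.mem_coe.mpr (Finset.mem_univ i), rfl⟩, rfl⟩
  · rintro ⟨v, ⟨i, -, rfl⟩, rfl⟩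
    exact ⟨i, Finset.mem_coe.mpr (Finset.mem_univ i), rfl⟩

lemma spanSingleton_unit (u : (𝓞 K)ˣ) :
    FractionalIdeal.spanSingleton (𝓞 K)⁰ ((u : 𝓞 K) : K) = 1 := by
  apply le_antisymm
  · rw [FractionalIdeal.spanSingleton_le_iff_mem, FractionalIdeal.mem_one_iff]
    exact ⟨u, rfl⟩
  · have h := FractionalIdeal.spanSingleton_mul_spanSingleton (S := (𝓞 K)⁰)
      ((u : 𝓞 K) : K) (((u⁻¹ : (𝓞 K)ˣ) : 𝓞 K) : K)
    have h2 : ((u : 𝓞 K) : K) * (((u⁻¹ : (𝓞 K)ˣ) : 𝓞 K) : K) = 1 := by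
      rw [← map_mul, Units.mul_inv, map_one]
    rw [h2, FractionalIdeal.spanSingleton_one] at h
    calc (1 : FractionalIdeal (𝓞 K)⁰ K)
        = _ * _ := h.symm
      _ ≤ FractionalIdeal.spanSingleton (𝓞 K)⁰ ((u : 𝓞 K) : K) * 1 := by
          refine mul_le_mul' le_rfl ?_
          rw [FractionalIdeal.spanSingleton_le_iff_mem, FractionalIdeal.mem_one_iff]
          exact ⟨((u⁻¹ : (𝓞 K)ˣ) : 𝓞 K), rfl⟩
      _ = _ := mul_one _

lemma sup_pos {m : ℕ} {z : Fin m → K} {i0 : Fin m} (h : z i0 ≠ 0) (w : InfinitePlace K) :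
    0 < ⨆ i, (w (z i)) ^ w.mult :=
  lt_of_lt_of_le (pow_pos (InfinitePlace.pos_iff.mpr h) _)
    (le_ciSup (f := fun i => (w (z i)) ^ w.mult) (Set.Finite.bddAbove (Set.finite_range _)) i0)

lemma sup_smul {m : ℕ} (a : K) (z : Fin m → K) (w : InfinitePlace K) :
    (⨆ i, (w (a * z i)) ^ w.mult) = (w a) ^ w.mult * ⨆ i, (w (z i)) ^ w.mult := by
  rw [Real.mul_iSup_of_nonneg (pow_nonneg (apply_nonneg w a) _)]
  congr 1; ext i; rw [map_mul, mul_pow]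

lemma Hinf_pos {m : ℕ} {z : Fin m → K} {i0 : Fin m} (h : z i0 ≠ 0) : 0 < Hinf z :=
  Finset.prod_pos fun w _ => sup_pos h w

lemma Hinf_smul {m : ℕ} (a : K) (z : Fin m → K) :
    Hinf (fun i => a * z i) = ((|Algebra.norm ℚ a| : ℚ) : ℝ) * Hinf z := by
  rw [Hinf, Hinf]
  calc ∏ w : InfinitePlace K, ⨆ i, (w (a * z i)) ^ w.mult
      = ∏ w : InfinitePlace K, ((w a) ^ w.mult * ⨆ i, (w (z i)) ^ w.mult) :=
        Finset.prod_congr rfl fun w _ => sup_smul a z w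
    _ = (∏ w : InfinitePlace K, (w a) ^ w.mult) * ∏ w : InfinitePlace K, ⨆ i, (w (z i)) ^ w.mult :=
        Finset.prod_mul_distrib
    _ = _ := by rw [InfinitePlace.prod_eq_abs_norm]

lemma logEmb_prod {ι : Type*} (tset : Finset ι) (g : ι → K) (hg : ∀ j ∈ tset, g j ≠ 0)
    (w : InfinitePlace K) :
    logEmb (∏ j ∈ tset, g j) w = ∑ j ∈ tset, logEmb (g j) w := by
  simp only [logEmb_eq, map_prod]
  rw [Real.log_prod (fun j hj => wne (hg j hj) w), Finset.mul_sum]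

/-- Every point `P ∈ ℙ^N(K)` with `H_K(P) ≤ B` and associated ideal class `Cl(𝔞)`
(expressed via homogeneous coordinates `y` of `P` whose span is `c⁻¹·𝔞` and with
`H_∞(y) ≤ B·N(span y)`, which by `H_K(P) = H_∞(y)/N(span y)` is exactly
`H_K(P) ≤ B` and `Cl(P) = Cl(𝔞)`) admits homogeneous coordinates `x_0,...,x_N ∈ 𝔞`
generating `𝔞`, with `|N_{K/ℚ}(x_i)| ≤ B·N(𝔞)` and
`‖x_i‖_v ≤ (B·N(𝔞))^{n_v/n}·exp(D_v)` for all `i` and all `v | ∞`. -/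
theorem statement4 {N : ℕ} (r : ℕ) (hr : 1 ≤ r) (ε : Fin r → (𝓞 K)ˣ)
    (hfund : ∀ u : (𝓞 K)ˣ, ∃ (ζ : (𝓞 K)ˣ) (m : Fin r → ℤ),
      IsOfFinOrder ζ ∧ u = ζ * ∏ j, ε j ^ m j)
    (D : InfinitePlace K → ℝ)
    (hD : ∀ w : InfinitePlace K, IsGreatest
      {s : ℝ | ∃ t : Fin r → ℝ, (∀ j, |t j| ≤ 1 / 2) ∧
        s = ∑ j, t j * logEmb ((ε j : 𝓞 K) : K) w} (D w))
    (𝔞 : Ideal (𝓞 K)) (h𝔞 : 𝔞 ≠ 0) (B : ℝ) (hB : 1 ≤ B)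
    (P : Projectivization K (Fin (N + 1) → K))
    (y : Fin (N + 1) → K) (hy : y ≠ 0) (hyP : Projectivization.mk K y hy = P)
    (c : K) (hc : c ≠ 0)
    (hCl : FractionalIdeal.spanFinset (𝓞 K) Finset.univ y =
      FractionalIdeal.spanSingleton (𝓞 K)⁰ c * (𝔞 : FractionalIdeal (𝓞 K)⁰ K))
    (hHB : Hinf y ≤ B * FractionalIdeal.absNorm
      (FractionalIdeal.spanFinset (𝓞 K) Finset.univ y)) :
    ∃ (x : Fin (N + 1) → K) (hx : x ≠ 0),
      Projectivization.mk K x hx = P ∧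
      (∀ i, x i ∈ (𝔞 : FractionalIdeal (𝓞 K)⁰ K)) ∧
      FractionalIdeal.spanFinset (𝓞 K) Finset.univ x = (𝔞 : FractionalIdeal (𝓞 K)⁰ K) ∧
      (∀ i, |(Algebra.norm ℚ (x i) : ℝ)| ≤ B * Ideal.absNorm 𝔞) ∧
      (∀ i, ∀ w : InfinitePlace K,
        (w (x i)) ^ w.mult ≤
          (B * Ideal.absNorm 𝔞) ^ ((w.mult : ℝ) / (Module.finrank ℚ K : ℝ)) *
            Real.exp (D w)) := by
  classical
  obtain ⟨i0, hi0⟩ := Function.ne_iff.mp hy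
  have hn0 : (0:ℝ) < (Module.finrank ℚ K : ℝ) := by exact_mod_cast Module.finrank_pos
  set x' : Fin (N+1) → K := fun i => c⁻¹ * y i with hx'def
  have hcinv : c⁻¹ ≠ 0 := inv_ne_zero hc
  have hx'i0 : x' i0 ≠ 0 := mul_ne_zero hcinv hi0
  set T : ℝ := B * (Ideal.absNorm 𝔞 : ℝ) with hT
  have hNa : (1:ℝ) ≤ (Ideal.absNorm 𝔞 : ℝ) := by
    have h1 : Ideal.absNorm 𝔞 ≠ 0 := fun h => h𝔞 (Ideal.absNorm_eq_zero_iff.mp h)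
    exact_mod_cast Nat.one_le_iff_ne_zero.mpr h1
  have hT1 : 1 ≤ T := by nlinarith
  have hT0 : 0 < T := lt_of_lt_of_le one_pos hT1
  -- norms of c
  have hNc0 : (0:ℝ) < ((|Algebra.norm ℚ c| : ℚ) : ℝ) := by
    have h1 : Algebra.norm ℚ c ≠ 0 := (Algebra.norm_ne_zero_iff).mpr hc
    exact_mod_cast abs_pos.mpr h1
  -- Hinf x' ≤ T
  have hyx' : y = fun i => c * x' i := by
    funext i; rw [hx'def]; field_simp
  have hHy : Hinf y = ((|Algebra.norm ℚ c| : ℚ) : ℝ) * Hinf x' := by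
    rw [hyx']; exact Hinf_smul c x'
  have hNspan : (FractionalIdeal.absNorm
      (FractionalIdeal.spanFinset (𝓞 K) Finset.univ y) : ℝ) =
      ((|Algebra.norm ℚ c| : ℚ) : ℝ) * (Ideal.absNorm 𝔞 : ℝ) := by
    rw [hCl, map_mul, FractionalIdeal.absNorm_span_singleton,
      FractionalIdeal.coeIdeal_absNorm]
    push_cast; ring
  have hHx' : Hinf x' ≤ T := by
    rw [hNspan, hHy] at hHB
    rw [hT]
    nlinarith [Hinf_pos hx'i0 (i0 := i0), hNc0]
  have hHx'pos : 0 < Hinf x' := Hinf_pos hx'i0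
  -- the log vector
  set S : InfinitePlace K → ℝ := fun w => ⨆ i, (w (x' i)) ^ w.mult with hS
  have hSpos : ∀ w, 0 < S w := fun w => sup_pos hx'i0 w
  set f : InfinitePlace K → ℝ := fun w =>
    Real.log (S w) - ((w.mult : ℝ) / (Module.finrank ℚ K : ℝ)) * Real.log (Hinf x') with hf
  have hfsum : ∑ w, f w = 0 := by
    rw [hf, Finset.sum_sub_distrib]
    have h1 : ∑ w, Real.log (S w) = Real.log (Hinf x') :=
      (Real.log_prod (fun w _ => (hSpos w).ne')).symm
    have h2 : ∑ w : InfinitePlace K,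
        ((w.mult : ℝ) / (Module.finrank ℚ K : ℝ)) * Real.log (Hinf x') =
        Real.log (Hinf x') := by
      rw [← Finset.sum_mul, ← Finset.sum_div]
      rw [show ∑ w : InfinitePlace K, (w.mult : ℝ) = (Module.finrank ℚ K : ℝ) by
        exact_mod_cast congrArg (Nat.cast (R := ℝ)) (InfinitePlace.sum_mult_eq (K := K))]
      rw [div_self hn0.ne', one_mul]
    rw [h1, h2, sub_self]
  obtain ⟨s, hs⟩ := exists_combo r ε hfund f hfsum
  set m : Fin r → ℤ := fun j => round (s j) with hm
  set u : (𝓞 K)ˣ := ∏ j, ε j ^ (-(m j)) with hu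
  -- coercion of u
  set φ : (𝓞 K)ˣ →* K := (algebraMap (𝓞 K) K).toMonoidHom.comp (Units.coeHom (𝓞 K)) with hφ
  have hφeq : ∀ v : (𝓞 K)ˣ, φ v = ((v : 𝓞 K) : K) := fun v => rfl
  have hcoeu : ((u : 𝓞 K) : K) = ∏ j, (((ε j : 𝓞 K) : K)) ^ (-(m j)) := by
    rw [← hφeq, hu, map_prod]
    exact Finset.prod_congr rfl fun j _ => by rw [map_zpow, hφeq]
  have hu0 : ((u : 𝓞 K) : K) ≠ 0 := by
    simpa using RingOfIntegers.coe_ne_zero (u : 𝓞 K)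
  have hlogu : ∀ w, logEmb ((u : 𝓞 K) : K) w =
      ∑ j, (-(m j) : ℝ) * logEmb ((ε j : 𝓞 K) : K) w := by
    intro w
    rw [hcoeu, logEmb_prod _ _ (fun j _ => zpow_ne_zero _ (by
      simpa using RingOfIntegers.coe_ne_zero ((ε j : (𝓞 K)ˣ) : 𝓞 K)))]
    exact Finset.sum_congr rfl fun j _ => by rw [logEmb_zpow]; push_cast; ring
  -- the new coordinates
  set a : K := ((u : 𝓞 K) : K) * c⁻¹ with ha
  have ha0 : a ≠ 0 := mul_ne_zero hu0 hcinv
  set x : Fin (N+1) → K := fun i => a * y i with hxdef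
  have hxx' : x = fun i => ((u : 𝓞 K) : K) * x' i := by
    funext i; rw [hxdef, hx'def, ha]; ring
  have hx0 : x ≠ 0 := Function.ne_iff.mpr ⟨i0, mul_ne_zero ha0 hi0⟩
  have hspan : FractionalIdeal.spanFinset (𝓞 K) Finset.univ x =
      (𝔞 : FractionalIdeal (𝓞 K)⁰ K) := by
    rw [hxdef, spanFinset_smul, hCl, ← mul_assoc,
      FractionalIdeal.spanSingleton_mul_spanSingleton,
      show a * c = ((u : 𝓞 K) : K) by rw [ha]; field_simp,
      spanSingleton_unit, one_mul]
  have hHx : Hinf x = Hinf x' := by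
    rw [hxx', Hinf_smul, NumberField.Units.norm]
    norm_num
  have hSx : ∀ w : InfinitePlace K, (⨆ i, (w (x i)) ^ w.mult) =
      (w ((u : 𝓞 K) : K)) ^ w.mult * S w := by
    intro w
    rw [hxx']
    exact sup_smul _ x' w
  refine ⟨x, hx0, ?_, ?_, hspan, ?_, ?_⟩
  · -- same projective point
    rw [← hyP, Projectivization.mk_eq_mk_iff]
    exact ⟨Units.mk0 a ha0, by funext i; simp [hxdef, Units.smul_def, mul_comm]⟩
  · -- membership
    intro i
    have h1 : x i ∈ FractionalIdeal.spanFinset (𝓞 K) Finset.univ x := by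
      rw [← FractionalIdeal.mem_coe, FractionalIdeal.spanFinset_coe]
      exact Submodule.subset_span ⟨i, Finset.mem_coe.mpr (Finset.mem_univ i), rfl⟩
    rwa [hspan] at h1
  · -- norm bound
    intro i
    rw [← Rat.cast_abs, ← InfinitePlace.prod_eq_abs_norm]
    calc ∏ w : InfinitePlace K, (w (x i)) ^ w.mult
        ≤ ∏ w : InfinitePlace K, ⨆ i', (w (x i')) ^ w.mult := by
          refine Finset.prod_le_prod (fun w _ => by positivity) (fun w _ => ?_)
          exact le_ciSup (f := fun i' => (w (x i')) ^ w.mult)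
            (Set.Finite.bddAbove (Set.finite_range _)) i
      _ = Hinf x := rfl
      _ ≤ T := by rw [hHx]; exact hHx'
  · -- place bound
    intro i w
    have h1 : (w (x i)) ^ w.mult ≤ (w ((u : 𝓞 K) : K)) ^ w.mult * S w := by
      rw [← hSx w]
      exact le_ciSup (f := fun i' => (w (x i')) ^ w.mult)
        (Set.Finite.bddAbove (Set.finite_range _)) i
    refine h1.trans ?_
    have hLpos : 0 < (w ((u : 𝓞 K) : K)) ^ w.mult * S w :=
      mul_pos (pow_pos (InfinitePlace.pos_iff.mpr hu0) _) (hSpos w)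
    have hRpos : 0 < T ^ ((w.mult : ℝ) / (Module.finrank ℚ K : ℝ)) * Real.exp (D w) :=
      mul_pos (Real.rpow_pos_of_pos hT0 _) (Real.exp_pos _)
    rw [← Real.log_le_log_iff hLpos hRpos,
      Real.log_mul (pow_ne_zero _ (wne hu0 w)) (hSpos w).ne',
      Real.log_mul (Real.rpow_pos_of_pos hT0 _).ne' (Real.exp_pos _).ne',
      Real.log_rpow hT0, Real.log_exp]
    have key : Real.log ((w ((u : 𝓞 K) : K)) ^ w.mult) + Real.log (S w) =
        (∑ j, (s j - (m j : ℝ)) * logEmb ((ε j : 𝓞 K) : K) w) +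
          ((w.mult : ℝ) / (Module.finrank ℚ K : ℝ)) * Real.log (Hinf x') := by
      have h2 : Real.log (S w) = f w +
          ((w.mult : ℝ) / (Module.finrank ℚ K : ℝ)) * Real.log (Hinf x') := by
        rw [hf]; ring
      rw [h2, show Real.log ((w ((u : 𝓞 K) : K)) ^ w.mult) =
        logEmb ((u : 𝓞 K) : K) w from rfl, hlogu w, hs w, ← add_assoc,
        ← Finset.sum_add_distrib]
      congr 1
      exact Finset.sum_congr rfl fun j _ => by ring
    rw [key]
    have hb1 : (∑ j, (s j - (m j : ℝ)) * logEmb ((ε j : 𝓞 K) : K) w) ≤ D w :=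
      (hD w).2 ⟨fun j => s j - (m j : ℝ), fun j => abs_sub_round (s j), rfl⟩
    have hb2 : ((w.mult : ℝ) / (Module.finrank ℚ K : ℝ)) * Real.log (Hinf x') ≤
        ((w.mult : ℝ) / (Module.finrank ℚ K : ℝ)) * Real.log T :=
      mul_le_mul_of_nonneg_left (Real.log_le_log hHx'pos hHx') (by positivity)
    linarith
end

section
/- Every nonzero element x ∈ C(𝔞,B) can be written as x = u·y where u ∈ O_K* is a unit, y ∈ I(𝔞,B), and ‖u‖_v ≤ (B·N(𝔞))^{n_v/n}·exp(D_v − A_v) for every Archimedean place v, where A_v = min_{y ∈ I(𝔞,B)} Λ(y)_v. -/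
open NumberField

open scoped nonZeroDivisors

variable {K : Type*} [Field K] [NumberField K]

/-- The set `C(𝔞,B) = {x ∈ 𝔞 : ‖x‖_v ≤ (B·N(𝔞))^{n_v/n}exp(D_v) ∀ v|∞,
|N_{K/ℚ}(x)| ≤ B·N(𝔞)}`. -/
def Cset (𝔞 : Ideal (𝓞 K)) (B : ℝ) (D : InfinitePlace K → ℝ) : Set K :=
  {x : K | x ∈ (𝔞 : FractionalIdeal (𝓞 K)⁰ K) ∧
    (∀ w : InfinitePlace K,
      (w x) ^ w.mult ≤ (B * Ideal.absNorm 𝔞) ^ ((w.mult : ℝ) / (Module.finrank ℚ K : ℝ)) *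
        Real.exp (D w)) ∧
    |(Algebra.norm ℚ x : ℝ)| ≤ B * Ideal.absNorm 𝔞}

/-- Every nonzero `x ∈ C(𝔞,B)` can be written `x = u·y` with `u ∈ O_K*`, `y ∈ I(𝔞,B)`,
and `‖u‖_v ≤ (B·N(𝔞))^{n_v/n}·exp(D_v − A_v)` for every Archimedean place `v`, where
`A_v = min_{y ∈ I(𝔞,B)} Λ(y)_v`. -/
theorem statement9 (𝔞 : Ideal (𝓞 K)) (h𝔞 : 𝔞 ≠ 0) (B : ℝ) (hB : 1 ≤ B)
    (D : InfinitePlace K → ℝ) (I : Finset K)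
    -- `I(𝔞,B)` is a set of generators for the nonzero principal ideals contained in `𝔞`
    -- of norm at most `B·N(𝔞)`:
    (hImem : ∀ y ∈ I, y ∈ (𝔞 : FractionalIdeal (𝓞 K)⁰ K) ∧ y ≠ 0 ∧
      |(Algebra.norm ℚ y : ℝ)| ≤ B * Ideal.absNorm 𝔞)
    (hIcover : ∀ x : K, x ∈ (𝔞 : FractionalIdeal (𝓞 K)⁰ K) → x ≠ 0 →
      |(Algebra.norm ℚ x : ℝ)| ≤ B * Ideal.absNorm 𝔞 →
      ∃ y ∈ I, ∃ u : (𝓞 K)ˣ, x = ((u : 𝓞 K) : K) * y)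
    (A : InfinitePlace K → ℝ)
    (hA : ∀ w : InfinitePlace K,
      IsLeast {s : ℝ | ∃ y ∈ I, s = Real.log ((w y) ^ w.mult)} (A w)) :
    ∀ x ∈ Cset 𝔞 B D, x ≠ 0 →
      ∃ (u : (𝓞 K)ˣ), ∃ y ∈ I, x = ((u : 𝓞 K) : K) * y ∧
        ∀ w : InfinitePlace K,
          (w ((u : 𝓞 K) : K)) ^ w.mult ≤
            (B * Ideal.absNorm 𝔞) ^ ((w.mult : ℝ) / (Module.finrank ℚ K : ℝ)) *
              Real.exp (D w - A w) := by

  intro x hx hx0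
  obtain ⟨hxmem, hxw, hxnorm⟩ := hx
  obtain ⟨y, hyI, u, hxy⟩ := hIcover x hxmem hx0 hxnorm
  refine ⟨u, y, hyI, hxy, fun w => ?_⟩
  obtain ⟨hymem, hy0, hynorm⟩ := hImem y hyI
  have hwy : 0 < w y := InfinitePlace.pos_iff.mpr hy0
  have hwyp : 0 < (w y) ^ w.mult := pow_pos hwy _
  have hAle : A w ≤ Real.log ((w y) ^ w.mult) := (hA w).2 ⟨y, hyI, rfl⟩
  have hexp : Real.exp (A w) ≤ (w y) ^ w.mult := by
    calc Real.exp (A w) ≤ Real.exp (Real.log ((w y) ^ w.mult)) := Real.exp_le_exp.2 hAle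
    _ = (w y) ^ w.mult := Real.exp_log hwyp
  have hmul : (w ((u : 𝓞 K) : K)) ^ w.mult * (w y) ^ w.mult = (w x) ^ w.mult := by
    rw [hxy, map_mul, mul_pow]
  have hbound := hxw w
  have hxw' : (w ((u : 𝓞 K) : K)) ^ w.mult * Real.exp (A w)
      ≤ (B * Ideal.absNorm 𝔞) ^ ((w.mult : ℝ) / (Module.finrank ℚ K : ℝ)) * Real.exp (D w) := by
    calc (w ((u : 𝓞 K) : K)) ^ w.mult * Real.exp (A w)
        ≤ (w ((u : 𝓞 K) : K)) ^ w.mult * ((w y) ^ w.mult) := by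
          exact mul_le_mul_of_nonneg_left hexp (by positivity)
    _ = (w x) ^ w.mult := hmul
    _ ≤ _ := hbound
  rw [Real.exp_sub, ← mul_div_assoc, le_div_iff₀ (Real.exp_pos (A w))]
  exact hxw'
end

section
/- Let g_1, ..., g_t be all numbers of the form g = ε_1^{n_1}···ε_r^{n_r}·y with y ∈ I(𝔞,B), (n_1,...,n_r) ∈ ℤ^r ∩ T^{-1}(U(𝔞,B)), and Φ(g) ∈ P(𝔞,B). Then 0, g_1, ..., g_t form a complete set of representatives for the orbit space C(𝔞,B)/μ_K: each g_i ∈ C(𝔞,B), the μ_K-orbits of 0, g_1, ..., g_t are pairwise distinct, and every element of C(𝔞,B) lies in the μ_K-orbit of some g_i or of 0. -/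
open NumberField

open scoped nonZeroDivisors

variable {K : Type*} [Field K] [NumberField K]

/-- `L_v = (n_v/n)(log B + log N(𝔞)) + D_v − A_v`. -/
noncomputable def Lconst (B : ℝ) (𝔞 : Ideal (𝓞 K)) (D A : InfinitePlace K → ℝ)
    (w : InfinitePlace K) : ℝ :=
  ((w.mult : ℝ) / (Module.finrank ℚ K : ℝ)) * (Real.log B + Real.log (Ideal.absNorm 𝔞)) +
    D w - A w

/-- `ζ` is a root of unity in `K`. -/
def IsRootOfUnity (ζ : K) : Prop := ∃ k : ℕ, 0 < k ∧ ζ ^ k = 1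

section AuxLemmas

lemma abs_norm_unit' (u : (𝓞 K)ˣ) :
    |(Algebra.norm ℚ (((u : 𝓞 K) : K)) : ℝ)| = 1 := by
  have h1 : IsUnit (Algebra.norm ℤ (u : 𝓞 K)) := u.isUnit.map (Algebra.norm ℤ)
  rcases Int.isUnit_iff.mp h1 with h | h <;>
    rw [← Algebra.coe_norm_int, h] <;> norm_num

lemma abs_norm_unit_mul' (u : (𝓞 K)ˣ) (y : K) :
    |(Algebra.norm ℚ (((u : 𝓞 K) : K) * y) : ℝ)| = |(Algebra.norm ℚ y : ℝ)| := by
  rw [map_mul]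
  push_cast
  rw [abs_mul, abs_norm_unit', one_mul]

lemma unit_mul_mem' (u : (𝓞 K)ˣ) {y : K} {𝔞 : Ideal (𝓞 K)}
    (hy : y ∈ (𝔞 : FractionalIdeal (𝓞 K)⁰ K)) :
    ((u : 𝓞 K) : K) * y ∈ (𝔞 : FractionalIdeal (𝓞 K)⁰ K) := by
  rw [FractionalIdeal.mem_coeIdeal] at hy ⊢
  obtain ⟨a, ha, rfl⟩ := hy
  exact ⟨(u : 𝓞 K) * a, Ideal.mul_mem_left _ _ ha, by simp [map_mul]⟩

lemma coe_unit_ne_zero' (u : (𝓞 K)ˣ) : (((u : 𝓞 K) : K)) ≠ 0 :=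
  RingOfIntegers.coe_ne_zero_iff.mpr u.ne_zero

lemma coeU' {r : ℕ} (ε : Fin r → (𝓞 K)ˣ) (m : Fin r → ℤ) :
    (((∏ j, ε j ^ m j : (𝓞 K)ˣ) : 𝓞 K) : K) = ∏ j, (((ε j : 𝓞 K) : K)) ^ m j := by
  have h1 : (((∏ j, ε j ^ m j : (𝓞 K)ˣ) : 𝓞 K) : K)
      = ((Units.map (algebraMap (𝓞 K) K).toMonoidHom (∏ j, ε j ^ m j) : Kˣ) : K) := rfl
  rw [h1, map_prod]
  rw [show ((∏ j, Units.map (algebraMap (𝓞 K) K).toMonoidHom (ε j ^ m j) : Kˣ) : K)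
      = ∏ j, ((Units.map (algebraMap (𝓞 K) K).toMonoidHom (ε j ^ m j) : Kˣ) : K)
    from map_prod (Units.coeHom K) _ _]
  refine Finset.prod_congr rfl fun j _ => ?_
  rw [map_zpow, Units.val_zpow_eq_zpow_val]
  rfl

lemma wlog_lem' {r : ℕ} (ε : Fin r → (𝓞 K)ˣ) (m : Fin r → ℤ) (w : InfinitePlace K) :
    Real.log (w (((∏ j, ε j ^ m j : (𝓞 K)ˣ) : 𝓞 K) : K) ^ w.mult)
      = ∑ k, (m k : ℝ) * Real.log (w (((ε k : 𝓞 K) : K)) ^ w.mult) := by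
  have hεne : ∀ k : Fin r, w (((ε k : 𝓞 K) : K)) ≠ 0 :=
    fun k => (InfinitePlace.pos_iff.mpr (coe_unit_ne_zero' (ε k))).ne'
  have h1 : ∀ j ∈ Finset.univ, w ((((ε j : 𝓞 K) : K)) ^ m j) ≠ 0 := fun j _ => by
    rw [map_zpow₀]; exact zpow_ne_zero _ (hεne j)
  rw [coeU', Real.log_pow, map_prod, Real.log_prod h1]
  simp_rw [map_zpow₀, Real.log_zpow]
  rw [Finset.mul_sum]
  refine Finset.sum_congr rfl fun k _ => ?_
  rw [Real.log_pow]
  ring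

lemma coe_coe_mul' (a b : (𝓞 K)ˣ) :
    (((a * b : (𝓞 K)ˣ) : 𝓞 K) : K) = ((a : 𝓞 K) : K) * ((b : 𝓞 K) : K) := by
  rw [Units.val_mul]; exact map_mul (algebraMap (𝓞 K) K) _ _

lemma coe_coe_inv' (a : (𝓞 K)ˣ) :
    (((a⁻¹ : (𝓞 K)ˣ) : 𝓞 K) : K) = (((a : 𝓞 K) : K))⁻¹ :=
  map_units_inv (algebraMap (𝓞 K) K) a

lemma coe_coe_pow' (a : (𝓞 K)ˣ) (k : ℕ) :
    (((a ^ k : (𝓞 K)ˣ) : 𝓞 K) : K) = (((a : 𝓞 K) : K)) ^ k := by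
  rw [Units.val_pow_eq_pow_val]; exact map_pow (algebraMap (𝓞 K) K) _ _

end AuxLemmas

/-- The numbers `g = ε_1^{n_1}···ε_r^{n_r}·y`, with `y ∈ I(𝔞,B)`,
`(n_1,...,n_r) ∈ ℤ^r ∩ T⁻¹(U(𝔞,B))` and `Φ(g) ∈ P(𝔞,B)`, together with `0`, form a
complete set of representatives for `C(𝔞,B)/μ_K`. -/
theorem statement14 (r : ℕ) (hr : 1 ≤ r)
    (e : Fin (r + 1) ≃ InfinitePlace K) (ε : Fin r → (𝓞 K)ˣ)
    (hfund : ∀ v : (𝓞 K)ˣ, ∃! p : (𝓞 K)ˣ × (Fin r → ℤ),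
      IsOfFinOrder p.1 ∧ v = p.1 * ∏ j, ε j ^ p.2 j)
    (T : Matrix (Fin r) (Fin r) ℝ)
    (hT : ∀ j k, T j k = Real.log ((e j.castSucc (((ε k : 𝓞 K) : K))) ^
      (e j.castSucc).mult))
    (𝔞 : Ideal (𝓞 K)) (h𝔞 : 𝔞 ≠ 0) (B : ℝ) (hB : 1 ≤ B)
    (D : InfinitePlace K → ℝ) (I : Finset K)
    (hImem : ∀ y ∈ I, y ∈ (𝔞 : FractionalIdeal (𝓞 K)⁰ K) ∧ y ≠ 0 ∧
      |(Algebra.norm ℚ y : ℝ)| ≤ B * Ideal.absNorm 𝔞)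
    (hIcover : ∀ x : K, x ∈ (𝔞 : FractionalIdeal (𝓞 K)⁰ K) → x ≠ 0 →
      |(Algebra.norm ℚ x : ℝ)| ≤ B * Ideal.absNorm 𝔞 →
      ∃ y ∈ I, ∃ u : (𝓞 K)ˣ, x = ((u : 𝓞 K) : K) * y)
    (hIdist : ∀ y ∈ I, ∀ y' ∈ I, (∃ u : (𝓞 K)ˣ, y' = ((u : 𝓞 K) : K) * y) → y' = y)
    (A : InfinitePlace K → ℝ)
    (hA : ∀ w : InfinitePlace K, ∀ y ∈ I, A w ≤ Real.log ((w y) ^ w.mult))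
    (hA' : I.Nonempty → ∀ w : InfinitePlace K,
      ∃ y ∈ I, A w = Real.log ((w y) ^ w.mult))
    (G : Set K)
    (hG : G = {g : K | ∃ y ∈ I, ∃ m : Fin r → ℤ,
      (∀ j : Fin r, T.mulVec (fun k => (m k : ℝ)) j ≤ Lconst B 𝔞 D A (e j.castSucc)) ∧
      -(Lconst B 𝔞 D A (e (Fin.last r))) ≤ ∑ j, T.mulVec (fun k => (m k : ℝ)) j ∧
      g = ((∏ j, ε j ^ m j : (𝓞 K)ˣ) : 𝓞 K) * y ∧
      (∀ w : InfinitePlace K,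
        (w g) ^ w.mult ≤
          (B * Ideal.absNorm 𝔞) ^ ((w.mult : ℝ) / (Module.finrank ℚ K : ℝ)) *
            Real.exp (D w))}) :
    G ⊆ Cset 𝔞 B D ∧
    (∀ g ∈ G, g ≠ 0) ∧
    (∀ g ∈ G, ∀ g' ∈ G, (∃ ζ : K, IsRootOfUnity ζ ∧ g' = ζ * g) → g' = g) ∧
    (∀ x ∈ Cset 𝔞 B D, x = 0 ∨ ∃ g ∈ G, ∃ ζ : K, IsRootOfUnity ζ ∧ x = ζ * g) := by
  classical
  subst hG
  have hNa : (0:ℝ) < ((Ideal.absNorm 𝔞 : ℕ) : ℝ) := by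
    have h : Ideal.absNorm 𝔞 ≠ 0 := by
      simpa [Ideal.absNorm_eq_zero_iff] using h𝔞
    exact_mod_cast Nat.pos_of_ne_zero h
  have hB0 : (0:ℝ) < B := lt_of_lt_of_le one_pos hB
  have hBN : (0:ℝ) < B * ((Ideal.absNorm 𝔞 : ℕ) : ℝ) := mul_pos hB0 hNa
  have hlogBN : Real.log (B * ((Ideal.absNorm 𝔞 : ℕ) : ℝ))
      = Real.log B + Real.log ((Ideal.absNorm 𝔞 : ℕ) : ℝ) :=
    Real.log_mul (ne_of_gt hB0) (ne_of_gt hNa)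
  have hlogle : ∀ x : K, x ≠ 0 →
      (∀ w : InfinitePlace K, (w x) ^ w.mult
        ≤ (B * Ideal.absNorm 𝔞) ^ ((w.mult : ℝ) / (Module.finrank ℚ K : ℝ)) * Real.exp (D w)) →
      ∀ w : InfinitePlace K, Real.log ((w x) ^ w.mult)
        ≤ ((w.mult : ℝ) / (Module.finrank ℚ K : ℝ)) *
            (Real.log B + Real.log (Ideal.absNorm 𝔞)) + D w := by
    intro x hx hbd w
    have hpos : 0 < w x := InfinitePlace.pos_iff.mpr hx
    have h1 := Real.log_le_log (pow_pos hpos w.mult) (hbd w)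
    rwa [Real.log_mul (ne_of_gt (Real.rpow_pos_of_pos hBN _)) (Real.exp_ne_zero _),
      Real.log_rpow hBN, Real.log_exp, hlogBN] at h1
  have hmulT : ∀ (m : Fin r → ℤ) (j : Fin r),
      T.mulVec (fun k => (m k : ℝ)) j
        = Real.log ((e j.castSucc) (((∏ i, ε i ^ m i : (𝓞 K)ˣ) : 𝓞 K) : K)
            ^ (e j.castSucc).mult) := by
    intro m j
    rw [wlog_lem']
    simp only [Matrix.mulVec, dotProduct, hT]
    exact Finset.sum_congr rfl fun k _ => mul_comm _ _
  have hsplit : ∀ (u : (𝓞 K)ˣ) (y : K), y ≠ 0 → ∀ w : InfinitePlace K,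
      Real.log ((w (((u : 𝓞 K) : K) * y)) ^ w.mult)
        = Real.log ((w (((u : 𝓞 K) : K))) ^ w.mult) + Real.log ((w y) ^ w.mult) := by
    intro u y hy w
    rw [map_mul, mul_pow,
      Real.log_mul (pow_ne_zero _ (InfinitePlace.pos_iff.mpr (coe_unit_ne_zero' u)).ne')
        (pow_ne_zero _ (InfinitePlace.pos_iff.mpr hy).ne')]
  have hsumu : ∀ u : (𝓞 K)ˣ,
      ∑ w : InfinitePlace K, Real.log ((w (((u : 𝓞 K) : K))) ^ w.mult) = 0 := by
    intro u
    rw [← Real.log_prod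
      (fun w _ => pow_ne_zero _ (InfinitePlace.pos_iff.mpr (coe_unit_ne_zero' u)).ne'),
      InfinitePlace.prod_eq_abs_norm]
    have h := abs_norm_unit' u
    push_cast
    rw [h]
    exact Real.log_one
  have hsumT : ∀ (u : (𝓞 K)ˣ),
      ∑ j : Fin r, Real.log (((e j.castSucc) (((u : 𝓞 K) : K))) ^ (e j.castSucc).mult)
        = - Real.log (((e (Fin.last r)) (((u : 𝓞 K) : K))) ^ (e (Fin.last r)).mult) := by
    intro u
    have h1 : ∑ i : Fin (r+1), Real.log (((e i) (((u : 𝓞 K) : K))) ^ (e i).mult)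
        = ∑ w : InfinitePlace K, Real.log ((w (((u : 𝓞 K) : K))) ^ w.mult) :=
      Fintype.sum_equiv e _ _ fun i => rfl
    have h2 := Fin.sum_univ_castSucc
      (f := fun i : Fin (r+1) => Real.log (((e i) (((u : 𝓞 K) : K))) ^ (e i).mult))
    rw [hsumu u] at h1
    rw [h2] at h1
    linarith
  refine ⟨?_, ?_, ?_, ?_⟩
  · -- G ⊆ Cset
    rintro g hg
    simp only [Set.mem_setOf_eq] at hg
    obtain ⟨y, hyI, m, -, -, hgy, hbd⟩ := hg
    obtain ⟨hy𝔞, hyne, hyN⟩ := hImem y hyI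
    exact ⟨hgy ▸ unit_mul_mem' _ hy𝔞, hbd, by rw [hgy, abs_norm_unit_mul']; exact hyN⟩
  · -- nonzero
    rintro g hg
    simp only [Set.mem_setOf_eq] at hg
    obtain ⟨y, hyI, m, -, -, hgy, -⟩ := hg
    obtain ⟨-, hyne, -⟩ := hImem y hyI
    rw [hgy]
    exact mul_ne_zero (coe_unit_ne_zero' _) hyne
  · -- distinct orbits
    rintro g hg g' hg' ⟨ζ, ⟨k, hk, hζk⟩, hgg⟩
    simp only [Set.mem_setOf_eq] at hg hg'
    obtain ⟨y, hyI, m, -, -, hgy, -⟩ := hg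
    obtain ⟨y', hyI', m', -, -, hgy', -⟩ := hg'
    obtain ⟨-, hyne, -⟩ := hImem y hyI
    have hint : IsIntegral ℤ ζ := IsIntegral.of_pow hk (by rw [hζk]; exact isIntegral_one)
    set ζ₀ : 𝓞 K := ⟨ζ, hint⟩ with hζ₀def
    have hζ₀coe : ((ζ₀ : K)) = ζ := rfl
    have hζ₀k : ζ₀ ^ k = 1 := by
      apply RingOfIntegers.ext
      rw [RingOfIntegers.coe_eq_algebraMap, map_pow]
      simpa [← RingOfIntegers.coe_eq_algebraMap, hζ₀coe] using hζk
    have hζ₀u : IsUnit ζ₀ := by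
      refine IsUnit.of_mul_eq_one (ζ₀ ^ (k-1)) ?_
      rw [← pow_succ', Nat.sub_add_cancel hk]
      exact hζ₀k
    set u : (𝓞 K)ˣ := ∏ i, ε i ^ m i with hu
    set u' : (𝓞 K)ˣ := ∏ i, ε i ^ m' i with hu'
    have hkey : ((u' : 𝓞 K) : K) * y' = ζ * (((u : 𝓞 K) : K) * y) := by
      rw [← hgy, ← hgy']; exact hgg
    have hcu : ((hζ₀u.unit : 𝓞 K) : K) = ζ := by rw [IsUnit.unit_spec]; exact hζ₀coe
    have hyy : y' = (((u'⁻¹ * hζ₀u.unit * u : (𝓞 K)ˣ) : 𝓞 K) : K) * y := by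
      have hc : (((u'⁻¹ * hζ₀u.unit * u : (𝓞 K)ˣ) : 𝓞 K) : K)
          = ((((u' : 𝓞 K) : K)))⁻¹ * ζ * (((u : 𝓞 K) : K)) := by
        rw [coe_coe_mul', coe_coe_mul', coe_coe_inv', hcu]
      rw [hc]
      have h0 : (((u' : 𝓞 K) : K)) ≠ 0 := coe_unit_ne_zero' u'
      field_simp
      linear_combination hkey
    have hy'y : y' = y := hIdist y hyI y' hyI' ⟨_, hyy⟩
    have hcancel : ((u' : 𝓞 K) : K) = ζ * ((u : 𝓞 K) : K) := by
      rw [hy'y] at hkey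
      exact mul_right_cancel₀ hyne (by linear_combination hkey)
    have huu : u' = hζ₀u.unit * u := by
      apply Units.ext
      apply RingOfIntegers.ext
      rw [show (((hζ₀u.unit * u : (𝓞 K)ˣ) : 𝓞 K) : K) = ζ * ((u : 𝓞 K) : K) by
        rw [coe_coe_mul', hcu]]
      exact hcancel
    have hford : IsOfFinOrder (hζ₀u.unit) := by
      refine isOfFinOrder_iff_pow_eq_one.mpr ⟨k, hk, ?_⟩
      apply Units.ext
      apply RingOfIntegers.ext
      rw [coe_coe_pow', hcu, hζk]
      rfl
    obtain ⟨p, -, hp⟩ := hfund u'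
    have h1 := hp (1, m') ⟨IsOfFinOrder.one, by rw [one_mul]⟩
    have h2 := hp (hζ₀u.unit, m) ⟨hford, huu⟩
    have hmm : m' = m := congrArg Prod.snd (h1.trans h2.symm)
    rw [hgy, hgy', hy'y, hu', hmm, ← hu]
  · -- completeness
    rintro x ⟨hx𝔞, hxbd, hxN⟩
    rcases eq_or_ne x 0 with h0 | h0
    · exact Or.inl h0
    right
    obtain ⟨y, hyI, u, hxu⟩ := hIcover x hx𝔞 h0 hxN
    obtain ⟨hy𝔞, hyne, hyN⟩ := hImem y hyI
    obtain ⟨⟨ζu, mm⟩, ⟨hford, hdec⟩, -⟩ := hfund u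
    obtain ⟨k, hk, hζuk⟩ := isOfFinOrder_iff_pow_eq_one.mp hford
    have hζK : (((ζu : 𝓞 K) : K)) ^ k = 1 := by
      rw [← coe_coe_pow', hζuk]
      rfl
    set u₀ : (𝓞 K)ˣ := ∏ i, ε i ^ mm i with hu₀
    set g : K := ((u₀ : 𝓞 K) : K) * y with hgdef
    have hxg : x = (((ζu : 𝓞 K) : K)) * g := by
      rw [hxu, hdec, hgdef, coe_coe_mul', mul_assoc]
    have hwζ : ∀ w : InfinitePlace K, w (((ζu : 𝓞 K) : K)) = 1 := by
      intro w
      have h1 : (w (((ζu : 𝓞 K) : K))) ^ k = 1 := by rw [← map_pow, hζK, map_one]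
      rcases (pow_eq_one_iff_of_ne_zero hk.ne').mp h1 with h | ⟨h, -⟩
      · exact h
      · have := apply_nonneg w (((ζu : 𝓞 K) : K))
        rw [h] at this
        linarith
    have hwxg : ∀ w : InfinitePlace K, w x = w g := fun w => by
      rw [hxg, map_mul, hwζ, one_mul]
    have hgbd : ∀ w : InfinitePlace K, (w g) ^ w.mult
        ≤ (B * Ideal.absNorm 𝔞) ^ ((w.mult : ℝ) / (Module.finrank ℚ K : ℝ)) *
            Real.exp (D w) := fun w => by
      rw [← hwxg w]; exact hxbd w
    have hgne : g ≠ 0 := mul_ne_zero (coe_unit_ne_zero' u₀) hyne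
    have hlg := hlogle g hgne hgbd
    refine ⟨g, ⟨y, hyI, mm, ?_, ?_, hgdef, hgbd⟩, (((ζu : 𝓞 K) : K)), ⟨k, hk, hζK⟩, hxg⟩
    · intro j
      have h1 := hmulT mm j
      have h2 := hsplit u₀ y hyne (e j.castSucc)
      rw [← hgdef] at h2
      have h3 := hlg (e j.castSucc)
      have h4 := hA (e j.castSucc) y hyI
      simp only [Lconst]
      rw [h1, ← hu₀]
      linarith
    · have h1 : ∑ j : Fin r, T.mulVec (fun k => ((mm k : ℝ))) j
          = ∑ j : Fin r, Real.log (((e j.castSucc) (((u₀ : 𝓞 K) : K)))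
              ^ (e j.castSucc).mult) := by
        refine Finset.sum_congr rfl fun j _ => ?_
        rw [hmulT mm j, ← hu₀]
      have h2 := hsumT u₀
      have h3 := hsplit u₀ y hyne (e (Fin.last r))
      rw [← hgdef] at h3
      have h4 := hlg (e (Fin.last r))
      have h5 := hA (e (Fin.last r)) y hyI
      simp only [Lconst]
      rw [h1, h2]
      linarith
end
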